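/- σ²_{lin,Φ}(θ^F, β^F) ≤ min{ σ²_lin(θ^L, β^L), σ²_NL, σ²_lin(0,0) }; that is, the estimator with the further-improved adjustment (optimal linear adjustment based on the augmented regressor Φ) is weakly more efficient than the optimally linearly adjusted estimator, the nonlinear (logistic) adjusted estimator, and the unadjusted estimator. -/

import Mathlib

open MeasureTheory ProbabilityTheory Finset

noncomputable section

/-- Population data for a covariate-adaptive randomization (CAR) design:
potential outcomes `Y1, Y0`, potential treatment take-ups `D1, D0` (valued in `{0,1}`),
covariates `X`, stratum `S`, and target assignment probabilities `piS`. -/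
structure CARPop (Ω : Type*) [MeasurableSpace Ω] (𝒮 : Type*) [MeasurableSpace 𝒮]
    (d : ℕ) where
  P : Measure Ω
  Y1 : Ω → ℝ
  Y0 : Ω → ℝ
  D1 : Ω → ℝ
  D0 : Ω → ℝ
  X : Ω → Fin d → ℝ
  S : Ω → 𝒮
  piS : 𝒮 → ℝ

namespace CARPop

variable {Ω : Type*} [MeasurableSpace Ω] {𝒮 : Type*} [MeasurableSpace 𝒮] {d : ℕ}

/-- Potential treatment take-up `D(a)`, with `a : Bool` (`true` = assigned to treatment). -/
def Da (c : CARPop Ω 𝒮 d) (a : Bool) : Ω → ℝ := if a then c.D1 else c.D0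

/-- `Y(D(a)) = Y(1)·D(a) + Y(0)·(1 − D(a))`. -/
def Ya (c : CARPop Ω 𝒮 d) (a : Bool) : Ω → ℝ :=
  fun ω => c.Y1 ω * c.Da a ω + c.Y0 ω * (1 - c.Da a ω)

/-- `W = Y(D(1))`. -/
def W (c : CARPop Ω 𝒮 d) : Ω → ℝ := c.Ya true

/-- `Z = Y(D(0))`. -/
def Z (c : CARPop Ω 𝒮 d) : Ω → ℝ := c.Ya false

/-- The compliers event `{D(1) > D(0)}`. -/
def compliers (c : CARPop Ω 𝒮 d) : Set Ω := {ω | c.D0 ω < c.D1 ω}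

/-- The LATE `τ = E[Y(1) − Y(0) | D(1) > D(0)]`. -/
def tau (c : CARPop Ω 𝒮 d) : ℝ :=
  (∫ ω in c.compliers, (c.Y1 ω - c.Y0 ω) ∂c.P) / (c.P c.compliers).toReal

/-- The stratum event `{S = s}`. -/
def stratum (c : CARPop Ω 𝒮 d) (s : 𝒮) : Set Ω := {ω | c.S ω = s}

/-- Conditional expectation given `S = s`: `E[f | S = s]`. -/
def cEs (c : CARPop Ω 𝒮 d) (s : 𝒮) (f : Ω → ℝ) : ℝ :=
  (∫ ω in c.stratum s, f ω ∂c.P) / (c.P (c.stratum s)).toReal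

/-- Conditional expectation given `S`, i.e. `E[f | S]` as the function `ω ↦ E[f | S = S ω]`. -/
def cES (c : CARPop Ω 𝒮 d) (f : Ω → ℝ) : Ω → ℝ := fun ω => c.cEs (c.S ω) f

/-- Centering at the conditional mean given `S`:  `f − E[f | S]`. -/
def tilt (c : CARPop Ω 𝒮 d) (f : Ω → ℝ) : Ω → ℝ := fun ω => f ω - c.cES f ω

/-- A working model `m(a, s, x)` evaluated along `(S, X)`. -/
def wm (c : CARPop Ω 𝒮 d) (m : Bool → 𝒮 → (Fin d → ℝ) → ℝ) (a : Bool) : Ω → ℝ :=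
  fun ω => m a (c.S ω) (c.X ω)

/-- Square-integrability bound for a working model: `E[(m(a,S,X))² | S = s] ≤ C < ∞`. -/
def WMBound (c : CARPop Ω 𝒮 d) (m : Bool → 𝒮 → (Fin d → ℝ) → ℝ) : Prop :=
  (∀ a : Bool, Measurable (fun ω => m a (c.S ω) (c.X ω))) ∧
    ∃ C : ℝ, ∀ (a : Bool) (s : 𝒮), c.cEs s (fun ω => (m a (c.S ω) (c.X ω)) ^ 2) ≤ C

/-- Influence term `Ξ₁` of the adjusted LATE estimator with working models `mY, mD`. -/
def Xi1 (c : CARPop Ω 𝒮 d) (mY mD : Bool → 𝒮 → (Fin d → ℝ) → ℝ) : Ω → ℝ := fun ω =>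
  ((1 - 1 / c.piS (c.S ω)) * c.tilt (c.wm mY true) ω - c.tilt (c.wm mY false) ω
      + c.tilt c.W ω / c.piS (c.S ω))
    - c.tau * ((1 - 1 / c.piS (c.S ω)) * c.tilt (c.wm mD true) ω
        - c.tilt (c.wm mD false) ω + c.tilt (c.Da true) ω / c.piS (c.S ω))

/-- Influence term `Ξ₀` of the adjusted LATE estimator with working models `mY, mD`. -/
def Xi0 (c : CARPop Ω 𝒮 d) (mY mD : Bool → 𝒮 → (Fin d → ℝ) → ℝ) : Ω → ℝ := fun ω =>
  ((1 / (1 - c.piS (c.S ω)) - 1) * c.tilt (c.wm mY false) ω + c.tilt (c.wm mY true) ω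
      - c.tilt c.Z ω / (1 - c.piS (c.S ω)))
    - c.tau * ((1 / (1 - c.piS (c.S ω)) - 1) * c.tilt (c.wm mD false) ω
        + c.tilt (c.wm mD true) ω - c.tilt (c.Da false) ω / (1 - c.piS (c.S ω)))

/-- Influence term `Ξ₂` (between-strata variation). -/
def Xi2 (c : CARPop Ω 𝒮 d) : Ω → ℝ := fun ω =>
  (c.cES (fun ω' => c.W ω' - c.Z ω') ω - ∫ ω', (c.W ω' - c.Z ω') ∂c.P)
    - c.tau * (c.cES (fun ω' => c.Da true ω' - c.Da false ω') ω
        - ∫ ω', (c.Da true ω' - c.Da false ω') ∂c.P)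

/-- `σ₁² = E[π(S)·Ξ₁²]`. -/
def sigma1Sq (c : CARPop Ω 𝒮 d) (mY mD : Bool → 𝒮 → (Fin d → ℝ) → ℝ) : ℝ :=
  ∫ ω, c.piS (c.S ω) * (c.Xi1 mY mD ω) ^ 2 ∂c.P

/-- `σ₀² = E[(1 − π(S))·Ξ₀²]`. -/
def sigma0Sq (c : CARPop Ω 𝒮 d) (mY mD : Bool → 𝒮 → (Fin d → ℝ) → ℝ) : ℝ :=
  ∫ ω, (1 - c.piS (c.S ω)) * (c.Xi0 mY mD ω) ^ 2 ∂c.P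

/-- `σ₂² = E[Ξ₂²]`. -/
def sigma2Sq (c : CARPop Ω 𝒮 d) : ℝ := ∫ ω, (c.Xi2 ω) ^ 2 ∂c.P

/-- Asymptotic variance `σ² = (σ₁² + σ₀² + σ₂²)/P(D(1) > D(0))²` of the adjusted
LATE estimator with working models `mY, mD`. -/
def sigmaSq (c : CARPop Ω 𝒮 d) (mY mD : Bool → 𝒮 → (Fin d → ℝ) → ℝ) : ℝ :=
  (c.sigma1Sq mY mD + c.sigma0Sq mY mD + c.sigma2Sq) / (c.P c.compliers).toReal ^ 2

/-- The population-level assumptions of the CAR setup (Assumption 1 of the paper). -/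
structure PopAssumptions (c : CARPop Ω 𝒮 d) : Prop where
  prob : IsProbabilityMeasure c.P
  mY1 : Measurable c.Y1
  mY0 : Measurable c.Y0
  mD1 : Measurable c.D1
  mD0 : Measurable c.D0
  mX : Measurable c.X
  mS : Measurable c.S
  d1Bin : ∀ ω, c.D1 ω = 0 ∨ c.D1 ω = 1
  d0Bin : ∀ ω, c.D0 ω = 0 ∨ c.D0 ω = 1
  noDefiers : c.P {ω | c.D1 ω = 0 ∧ c.D0 ω = 1} = 0
  compliersPos : 0 < c.P c.compliers
  strataPos : ∀ s, 0 < c.P (c.stratum s)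
  piRange : ∃ cc : ℝ, 0 < cc ∧ cc < 1 / 2 ∧ ∀ s, cc < c.piS s ∧ c.piS s < 1 - cc
  momentY : ∃ q C : ℝ, 4 ≤ q ∧ ∀ s,
    c.cEs s (fun ω => |c.Y1 ω| ^ q) ≤ C ∧ c.cEs s (fun ω => |c.Y0 ω| ^ q) ≤ C
  intY1sq : Integrable (fun ω => c.Y1 ω ^ 2) c.P
  intY0sq : Integrable (fun ω => c.Y0 ω ^ 2) c.P

section Linear

variable {ι : Type*} [Fintype ι] [DecidableEq ι]

/-- Centered regressor `Ψ̃ₛ = Ψₛ(X) − E[Ψₛ(X) | S = s]`. -/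
def psiTilt (c : CARPop Ω 𝒮 d) (Ψ : 𝒮 → (Fin d → ℝ) → ι → ℝ) (s : 𝒮) : Ω → ι → ℝ :=
  fun ω j => Ψ s (c.X ω) j - c.cEs s (fun ω' => Ψ s (c.X ω') j)

/-- Within-stratum Gram matrix `E[Ψ̃ₛΨ̃ₛᵀ | S = s]`. -/
def gram (c : CARPop Ω 𝒮 d) (Ψ : 𝒮 → (Fin d → ℝ) → ι → ℝ) (s : 𝒮) : Matrix ι ι ℝ :=
  Matrix.of fun i j => c.cEs s (fun ω => c.psiTilt Ψ s ω i * c.psiTilt Ψ s ω j)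

/-- Optimal linear coefficient `θᴸ(a,s) = (E[Ψ̃Ψ̃ᵀ|S=s])⁻¹ E[Ψ̃·Y(D(a)) | S=s]`. -/
def thetaL (c : CARPop Ω 𝒮 d) (Ψ : 𝒮 → (Fin d → ℝ) → ι → ℝ) (a : Bool) (s : 𝒮) : ι → ℝ :=
  Matrix.mulVec (c.gram Ψ s)⁻¹ (fun j => c.cEs s (fun ω => c.psiTilt Ψ s ω j * c.Ya a ω))

/-- Optimal linear coefficient `βᴸ(a,s) = (E[Ψ̃Ψ̃ᵀ|S=s])⁻¹ E[Ψ̃·D(a) | S=s]`. -/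
def betaL (c : CARPop Ω 𝒮 d) (Ψ : 𝒮 → (Fin d → ℝ) → ι → ℝ) (a : Bool) (s : 𝒮) : ι → ℝ :=
  Matrix.mulVec (c.gram Ψ s)⁻¹ (fun j => c.cEs s (fun ω => c.psiTilt Ψ s ω j * c.Da a ω))

/-- Linear working model `x ↦ Ψₛ(x)ᵀ t(a,s)`. -/
def linWM (Ψ : 𝒮 → (Fin d → ℝ) → ι → ℝ) (t : Bool → 𝒮 → ι → ℝ) :
    Bool → 𝒮 → (Fin d → ℝ) → ℝ :=
  fun a s x => ∑ j, Ψ s x j * t a s j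

/-- Asymptotic variance of the LATE estimator with linear adjustments
`μ̄ʸ(a,s,x) = Ψₛ(x)ᵀ t(a,s)` and `μ̄ᴰ(a,s,x) = Ψₛ(x)ᵀ b(a,s)`. -/
def sigmaSqLin (c : CARPop Ω 𝒮 d) (Ψ : 𝒮 → (Fin d → ℝ) → ι → ℝ)
    (t b : Bool → 𝒮 → ι → ℝ) : ℝ :=
  c.sigmaSq (linWM Ψ t) (linWM Ψ b)

/-- Regularity of the regressor `Ψ`: measurability, a conditional moment bound of
order `q > 2`, and eigenvalues of the within-stratum Gram matrices of the centered
regressor bounded away from `0` and `∞`. -/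
def PsiRegular (c : CARPop Ω 𝒮 d) (Ψ : 𝒮 → (Fin d → ℝ) → ι → ℝ) : Prop :=
  (∀ s, Measurable (Ψ s)) ∧
  (∃ q C : ℝ, 2 < q ∧ ∀ s,
      c.cEs s (fun ω => (∑ j, (Ψ (c.S ω) (c.X ω) j) ^ 2) ^ (q / 2)) ≤ C) ∧
  (∃ c' C' : ℝ, 0 < c' ∧ c' ≤ C' ∧ ∀ s, ∀ v : ι → ℝ,
      c' * (∑ j, v j ^ 2) ≤ (∑ j, v j * Matrix.mulVec (c.gram Ψ s) v j) ∧
        (∑ j, v j * Matrix.mulVec (c.gram Ψ s) v j) ≤ C' * (∑ j, v j ^ 2))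

end Linear

end CARPop

namespace CARPop

variable {Ω : Type*} [MeasurableSpace Ω] {𝒮 : Type*} [MeasurableSpace 𝒮] {d k : ℕ}

/-- Logistic CDF `λ(u) = eᵘ/(1 + eᵘ)`. -/
def logistic (u : ℝ) : ℝ := Real.exp u / (1 + Real.exp u)

/-- Regressor with intercept: `Ψ̊ₛ(x) = (1, Ψₛ(x)ᵀ)ᵀ`. -/
def ringPsi (Ψ : 𝒮 → (Fin d → ℝ) → Fin k → ℝ) (s : 𝒮) (x : Fin d → ℝ) :
    Fin (k + 1) → ℝ :=
  Fin.cons 1 (Ψ s x)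

/-- Population logistic log-likelihood given `S = s` and arm `a`, at coefficient `b`. -/
def logLik (c : CARPop Ω 𝒮 d) (Ψ : 𝒮 → (Fin d → ℝ) → Fin k → ℝ) (a : Bool) (s : 𝒮)
    (b : Fin (k + 1) → ℝ) : ℝ :=
  c.cEs s (fun ω =>
    c.Da a ω * Real.log (logistic (∑ j, ringPsi Ψ s (c.X ω) j * b j))
      + (1 - c.Da a ω) * Real.log (1 - logistic (∑ j, ringPsi Ψ s (c.X ω) j * b j)))

/-- Uncentered within-stratum Gram matrix `E[Ψ̊ₛΨ̊ₛᵀ | S = s]`. -/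
def gram0 (c : CARPop Ω 𝒮 d) (Ψ : 𝒮 → (Fin d → ℝ) → Fin k → ℝ) (s : 𝒮) :
    Matrix (Fin (k + 1)) (Fin (k + 1)) ℝ :=
  Matrix.of fun i j =>
    c.cEs s (fun ω => ringPsi Ψ s (c.X ω) i * ringPsi Ψ s (c.X ω) j)

/-- Population OLS coefficient `θᴼᴸˢ(a,s) = (E[Ψ̊Ψ̊ᵀ|S=s])⁻¹ E[Ψ̊·Y(D(a))|S=s]`. -/
def thetaOLS (c : CARPop Ω 𝒮 d) (Ψ : 𝒮 → (Fin d → ℝ) → Fin k → ℝ) (a : Bool) (s : 𝒮) :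
    Fin (k + 1) → ℝ :=
  Matrix.mulVec (c.gram0 Ψ s)⁻¹
    (fun j => c.cEs s (fun ω => ringPsi Ψ s (c.X ω) j * c.Ya a ω))

/-- Augmented regressor `Φₛ(x) = (Ψₛ(x)ᵀ, λ(Ψ̊ₛ(x)ᵀβᴹᴸᴱ₁ₛ), λ(Ψ̊ₛ(x)ᵀβᴹᴸᴱ₀ₛ))ᵀ`. -/
def Phi (Ψ : 𝒮 → (Fin d → ℝ) → Fin k → ℝ) (βMLE : Bool → 𝒮 → Fin (k + 1) → ℝ)
    (s : 𝒮) (x : Fin d → ℝ) : (Fin k ⊕ Bool) → ℝ :=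
  Sum.elim (Ψ s x) (fun a => logistic (∑ j, ringPsi Ψ s x j * βMLE a s j))

end CARPop

set_option linter.unusedSectionVars false
section Helpers

open CARPop MeasureTheory

variable {Ω : Type*} [MeasurableSpace Ω] {𝒮 : Type*} [Fintype 𝒮] [MeasurableSpace 𝒮]
    [MeasurableSingletonClass 𝒮] {d : ℕ}

lemma abs_le_sumS (g : 𝒮 → ℝ) (s₀ : 𝒮) : |g s₀| ≤ ∑ s, |g s| :=
  Finset.single_le_sum (fun s _ => abs_nonneg (g s)) (Finset.mem_univ s₀)

lemma stratum_meas (c : CARPop Ω 𝒮 d) (hS : Measurable c.S) (s : 𝒮) :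
    MeasurableSet (c.stratum s) := hS (measurableSet_singleton s)

lemma mem_stratum (c : CARPop Ω 𝒮 d) {s : 𝒮} {ω : Ω} : ω ∈ c.stratum s ↔ c.S ω = s :=
  Iff.rfl

lemma sum_indicator_stratum (c : CARPop Ω 𝒮 d) (f : Ω → ℝ) (ω : Ω) :
    ∑ s, (c.stratum s).indicator f ω = f ω := by
  rw [Finset.sum_eq_single (c.S ω)]
  · exact Set.indicator_of_mem (show ω ∈ c.stratum (c.S ω) from rfl) f
  · intro s _ hs
    exact Set.indicator_of_notMem (fun h => hs ((mem_stratum c).1 h).symm) f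
  · exact fun h => absurd (Finset.mem_univ _) h

lemma measurable_compS (c : CARPop Ω 𝒮 d) (hS : Measurable c.S) (F : 𝒮 → Ω → ℝ)
    (hF : ∀ s, Measurable (F s)) : Measurable (fun ω => F (c.S ω) ω) := by
  have : (fun ω => F (c.S ω) ω)
      = fun ω => ∑ s, (c.stratum s).indicator (F s) ω := by
    funext ω
    rw [Finset.sum_eq_single (c.S ω)]
    · exact (Set.indicator_of_mem (show ω ∈ c.stratum (c.S ω) from rfl) _).symm
    · intro s _ hs
      exact Set.indicator_of_notMem (fun h => hs ((mem_stratum c).1 h).symm) _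
    · exact fun h => absurd (Finset.mem_univ _) h
  rw [this]
  exact Finset.measurable_sum _ fun s _ => (hF s).indicator (stratum_meas c hS s)

lemma integral_strata (c : CARPop Ω 𝒮 d) (hS : Measurable c.S) (f : Ω → ℝ)
    (hf : Integrable f c.P) :
    ∫ ω, f ω ∂c.P = ∑ s, ∫ ω in c.stratum s, f ω ∂c.P := by
  have h1 : ∫ ω, f ω ∂c.P = ∫ ω, ∑ s, (c.stratum s).indicator f ω ∂c.P := by
    congr 1; funext ω; rw [sum_indicator_stratum]
  rw [h1, integral_finset_sum _
    (fun s _ => hf.indicator (stratum_meas c hS s))]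
  exact Finset.sum_congr rfl fun s _ => integral_indicator (stratum_meas c hS s)

lemma integrable_of_strata (c : CARPop Ω 𝒮 d) (hS : Measurable c.S) (f : Ω → ℝ)
    (hf : ∀ s, IntegrableOn f (c.stratum s) c.P) : Integrable f c.P := by
  have : Integrable (fun ω => ∑ s, (c.stratum s).indicator f ω) c.P :=
    integrable_finset_sum _ fun s _ => ((hf s).integrable_indicator (stratum_meas c hS s))
  exact this.congr (Filter.Eventually.of_forall fun ω => sum_indicator_stratum c f ω)

lemma memL2_of_S (c : CARPop Ω 𝒮 d) (hP : IsProbabilityMeasure c.P)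
    (hS : Measurable c.S) (g : 𝒮 → ℝ) :
    MemLp (fun ω => g (c.S ω)) 2 c.P := by
  haveI := hP
  exact MemLp.of_bound
    ((measurable_compS c hS (fun s _ => g s) (fun s => measurable_const)).aestronglyMeasurable)
    (∑ s, |g s|) (Filter.Eventually.of_forall fun ω => by
      simpa [Real.norm_eq_abs] using abs_le_sumS g (c.S ω))

lemma memL2_mulS (c : CARPop Ω 𝒮 d) (hS : Measurable c.S) (g : 𝒮 → ℝ) {f : Ω → ℝ}
    (hf : MemLp f 2 c.P) : MemLp (fun ω => g (c.S ω) * f ω) 2 c.P := by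
  refine MemLp.of_le_mul (c := ∑ s, |g s|) hf
    (((measurable_compS c hS (fun s _ => g s)
      (fun s => measurable_const)).aestronglyMeasurable).mul hf.1) ?_
  refine Filter.Eventually.of_forall fun ω => ?_
  rw [norm_mul]
  exact mul_le_mul_of_nonneg_right (by simpa [Real.norm_eq_abs] using abs_le_sumS g (c.S ω))
    (norm_nonneg _)

lemma memL2_mulS' (c : CARPop Ω 𝒮 d) (hS : Measurable c.S) (g : 𝒮 → ℝ) {f : Ω → ℝ}
    (hf : MemLp f 2 c.P) : MemLp (fun ω => f ω * g (c.S ω)) 2 c.P := by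
  simpa [mul_comm] using memL2_mulS c hS g hf

lemma memL2_divS (c : CARPop Ω 𝒮 d) (hS : Measurable c.S) (g : 𝒮 → ℝ) {f : Ω → ℝ}
    (hf : MemLp f 2 c.P) : MemLp (fun ω => f ω / g (c.S ω)) 2 c.P := by
  simpa [div_eq_mul_inv] using memL2_mulS' c hS (fun s => (g s)⁻¹) hf

lemma integrable_mul_L2 {α : Type*} [MeasurableSpace α] {μ : Measure α} {f g : α → ℝ}
    (hf : MemLp f 2 μ) (hg : MemLp g 2 μ) :
    Integrable (fun ω => f ω * g ω) μ := by
  have hf2 : Integrable (fun ω => f ω ^ 2) μ := (memLp_two_iff_integrable_sq hf.1).1 hf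
  have hg2 : Integrable (fun ω => g ω ^ 2) μ := (memLp_two_iff_integrable_sq hg.1).1 hg
  refine Integrable.mono' ((hf2.add hg2).div_const 2) (hf.1.mul hg.1)
    (Filter.Eventually.of_forall fun ω => ?_)
  rw [Real.norm_eq_abs, abs_mul]
  simp only [Pi.add_apply]
  nlinarith [sq_nonneg (|f ω| - |g ω|), sq_abs (f ω), sq_abs (g ω),
    abs_nonneg (f ω), abs_nonneg (g ω)]

end Helpers
section Helpers2
set_option linter.unusedSectionVars false

open CARPop MeasureTheory

variable {Ω : Type*} [MeasurableSpace Ω] {𝒮 : Type*} [Fintype 𝒮] [MeasurableSpace 𝒮]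
    [MeasurableSingletonClass 𝒮] {d : ℕ}

lemma pStratum_pos (c : CARPop Ω 𝒮 d) (hc : c.PopAssumptions) (s : 𝒮) :
    0 < (c.P (c.stratum s)).toReal := by
  haveI := hc.prob
  exact ENNReal.toReal_pos (hc.strataPos s).ne' (measure_ne_top _ _)

/-- `∫_{S=s} f = cEs s f * P(S=s)`. -/
lemma setIntegral_eq_cEs (c : CARPop Ω 𝒮 d) (hc : c.PopAssumptions) (s : 𝒮) (f : Ω → ℝ) :
    ∫ ω in c.stratum s, f ω ∂c.P = c.cEs s f * (c.P (c.stratum s)).toReal := by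
  rw [CARPop.cEs, div_mul_cancel₀ _ (pStratum_pos c hc s).ne']

lemma cEs_congr (c : CARPop Ω 𝒮 d) (hS : Measurable c.S) {s : 𝒮} {f g : Ω → ℝ}
    (h : ∀ ω ∈ c.stratum s, f ω = g ω) : c.cEs s f = c.cEs s g := by
  unfold CARPop.cEs
  rw [setIntegral_congr_fun (stratum_meas c hS s) h]

lemma cEs_constS (c : CARPop Ω 𝒮 d) (hc : c.PopAssumptions) (s : 𝒮) (r : ℝ) :
    c.cEs s (fun _ => r) = r := by
  unfold CARPop.cEs
  rw [setIntegral_const, smul_eq_mul, measureReal_def, mul_comm, mul_div_assoc,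
    div_self (pStratum_pos c hc s).ne', mul_one]

lemma cEs_add (c : CARPop Ω 𝒮 d) {s : 𝒮} {f g : Ω → ℝ}
    (hf : IntegrableOn f (c.stratum s) c.P) (hg : IntegrableOn g (c.stratum s) c.P) :
    c.cEs s (fun ω => f ω + g ω) = c.cEs s f + c.cEs s g := by
  unfold CARPop.cEs
  rw [integral_add hf hg, add_div]

lemma cEs_zero (c : CARPop Ω 𝒮 d) (s : 𝒮) : c.cEs s (fun _ => (0:ℝ)) = 0 := by
  unfold CARPop.cEs
  simp

/-- `cEs s (g(S) + f) = g s + cEs s f` on the stratum. -/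
lemma tilt_constS_add (c : CARPop Ω 𝒮 d) (hc : c.PopAssumptions) (hS : Measurable c.S)
    (g : 𝒮 → ℝ) (f : Ω → ℝ) (hf : ∀ s, IntegrableOn f (c.stratum s) c.P) (ω : Ω) :
    c.tilt (fun ω' => g (c.S ω') + f ω') ω = c.tilt f ω := by
  unfold CARPop.tilt CARPop.cES
  have h1 : c.cEs (c.S ω) (fun ω' => g (c.S ω') + f ω')
      = g (c.S ω) + c.cEs (c.S ω) f := by
    rw [cEs_congr c hS (g := fun ω' => g (c.S ω) + f ω')
      (fun ω' hω' => by rw [(mem_stratum c).1 hω'])]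
    rw [cEs_add c (integrableOn_const (ne_of_lt (by
      haveI := hc.prob
      exact measure_lt_top _ _))) (hf _), cEs_constS c hc]
  rw [h1]; ring

lemma tilt_zero_wm (c : CARPop Ω 𝒮 d) (ω : Ω) : c.tilt (fun _ => (0:ℝ)) ω = 0 := by
  unfold CARPop.tilt CARPop.cES
  rw [cEs_zero]; ring

end Helpers2
section Helpers3
set_option linter.unusedSectionVars false

open CARPop MeasureTheory

variable {Ω : Type*} [MeasurableSpace Ω] {𝒮 : Type*} [Fintype 𝒮] [MeasurableSpace 𝒮]
    [MeasurableSingletonClass 𝒮] {d : ℕ} {ι : Type*} [Fintype ι] [DecidableEq ι]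

lemma quadform_diag (c : CARPop Ω 𝒮 d) (Φ : 𝒮 → (Fin d → ℝ) → ι → ℝ) (s : 𝒮) (j : ι) :
    (∑ i, (fun i => if i = j then (1:ℝ) else 0) i *
        Matrix.mulVec (c.gram Φ s) (fun i => if i = j then (1:ℝ) else 0) i)
      = c.gram Φ s j j := by
  rw [Finset.sum_eq_single j]
  · simp [Matrix.mulVec, dotProduct]
  · intro i _ hi; simp [hi]
  · exact fun h => absurd (Finset.mem_univ _) h

lemma psiTilt_meas (c : CARPop Ω 𝒮 d) (hX : Measurable c.X)
    (Φ : 𝒮 → (Fin d → ℝ) → ι → ℝ) (hmeas : ∀ s, Measurable (Φ s)) (s : 𝒮) (j : ι) :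
    Measurable (fun ω => c.psiTilt Φ s ω j) :=
  (((measurable_pi_apply j).comp ((hmeas s).comp hX))).sub measurable_const

/-- integrability of the squared centered regressor within stratum, from the
eigenvalue lower bound. -/
lemma psiTilt_sq_intOn (c : CARPop Ω 𝒮 d) (hc : c.PopAssumptions)
    (Φ : 𝒮 → (Fin d → ℝ) → ι → ℝ) (hmeas : ∀ s, Measurable (Φ s))
    {c' : ℝ} (hc'0 : 0 < c')
    (heig : ∀ s (v : ι → ℝ), c' * (∑ j, v j ^ 2)
      ≤ ∑ j, v j * Matrix.mulVec (c.gram Φ s) v j)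
    (s : 𝒮) (j : ι) :
    IntegrableOn (fun ω => c.psiTilt Φ s ω j * c.psiTilt Φ s ω j) (c.stratum s) c.P := by
  by_contra h
  have hint : ∫ ω in c.stratum s, c.psiTilt Φ s ω j * c.psiTilt Φ s ω j ∂c.P = 0 :=
    integral_undef h
  have hdiag : c.gram Φ s j j = 0 := by
    show c.cEs s _ = 0
    unfold CARPop.cEs
    rw [hint, zero_div]
  have h2 := heig s (fun i => if i = j then (1:ℝ) else 0)
  rw [quadform_diag, hdiag] at h2
  have h3 : ∑ i, (if i = j then (1:ℝ) else 0) ^ 2 = 1 := by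
    rw [Finset.sum_eq_single j] <;> simp +contextual
  rw [h3, mul_one] at h2
  exact absurd h2 (not_le.2 hc'0)

lemma psiTilt_memL2_restrict (c : CARPop Ω 𝒮 d) (hc : c.PopAssumptions)
    (hX : Measurable c.X)
    (Φ : 𝒮 → (Fin d → ℝ) → ι → ℝ) (hmeas : ∀ s, Measurable (Φ s))
    {c' : ℝ} (hc'0 : 0 < c')
    (heig : ∀ s (v : ι → ℝ), c' * (∑ j, v j ^ 2)
      ≤ ∑ j, v j * Matrix.mulVec (c.gram Φ s) v j)
    (s : 𝒮) (j : ι) :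
    MemLp (fun ω => c.psiTilt Φ s ω j) 2 (c.P.restrict (c.stratum s)) := by
  refine (memLp_two_iff_integrable_sq
    (psiTilt_meas c hX Φ hmeas s j).aestronglyMeasurable).2 ?_
  have := psiTilt_sq_intOn c hc Φ hmeas hc'0 heig s j
  simpa [pow_two] using IntegrableOn.integrable this

lemma phi_intOn (c : CARPop Ω 𝒮 d) (hc : c.PopAssumptions) (hX : Measurable c.X)
    (Φ : 𝒮 → (Fin d → ℝ) → ι → ℝ) (hmeas : ∀ s, Measurable (Φ s))
    {c' : ℝ} (hc'0 : 0 < c')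
    (heig : ∀ s (v : ι → ℝ), c' * (∑ j, v j ^ 2)
      ≤ ∑ j, v j * Matrix.mulVec (c.gram Φ s) v j)
    (s : 𝒮) (j : ι) :
    IntegrableOn (fun ω => Φ s (c.X ω) j) (c.stratum s) c.P := by
  haveI := hc.prob
  have h1 : Integrable (fun ω => c.psiTilt Φ s ω j) (c.P.restrict (c.stratum s)) :=
    (psiTilt_memL2_restrict c hc hX Φ hmeas hc'0 heig s j).integrable one_le_two
  have : (fun ω => Φ s (c.X ω) j)
      = fun ω => c.psiTilt Φ s ω j + c.cEs s (fun ω' => Φ s (c.X ω') j) := by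
    funext ω; simp [CARPop.psiTilt]
  rw [this]
  exact h1.add (integrableOn_const (ne_of_lt (measure_lt_top _ _)))

/-- global square-integrability of the composed regressor `ω ↦ Φ (S ω) (X ω) j`. -/
lemma phi_memL2 (c : CARPop Ω 𝒮 d) (hc : c.PopAssumptions)
    (Φ : 𝒮 → (Fin d → ℝ) → ι → ℝ) (hmeas : ∀ s, Measurable (Φ s))
    {c' : ℝ} (hc'0 : 0 < c')
    (heig : ∀ s (v : ι → ℝ), c' * (∑ j, v j ^ 2)
      ≤ ∑ j, v j * Matrix.mulVec (c.gram Φ s) v j)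
    (j : ι) :
    MemLp (fun ω => Φ (c.S ω) (c.X ω) j) 2 c.P := by
  haveI := hc.prob
  have hS := hc.mS; have hX := hc.mX
  have hm : Measurable (fun ω => Φ (c.S ω) (c.X ω) j) :=
    measurable_compS c hS (fun s ω => Φ s (c.X ω) j)
      (fun s => (measurable_pi_apply j).comp ((hmeas s).comp hX))
  refine (memLp_two_iff_integrable_sq hm.aestronglyMeasurable).2 ?_
  refine integrable_of_strata c hS _ (fun s => ?_)
  have h2 := psiTilt_sq_intOn c hc Φ hmeas hc'0 heig s j
  have h1 : Integrable (fun ω => c.psiTilt Φ s ω j) (c.P.restrict (c.stratum s)) :=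
    (psiTilt_memL2_restrict c hc hX Φ hmeas hc'0 heig s j).integrable one_le_two
  set r := c.cEs s (fun ω' => Φ s (c.X ω') j) with hr
  have key : ∀ ω ∈ c.stratum s,
      Φ (c.S ω) (c.X ω) j ^ 2
        = c.psiTilt Φ s ω j * c.psiTilt Φ s ω j
          + (2 * r) * c.psiTilt Φ s ω j + r ^ 2 := by
    intro ω hω
    rw [(mem_stratum c).1 hω]
    simp only [CARPop.psiTilt, ← hr]
    ring
  refine (IntegrableOn.congr_fun ?_ (fun ω hω => (key ω hω).symm) (stratum_meas c hS s))
  exact (h2.add (h1.const_mul _)).add (integrableOn_const (ne_of_lt (measure_lt_top _ _)))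

lemma gram_unit (c : CARPop Ω 𝒮 d) (Φ : 𝒮 → (Fin d → ℝ) → ι → ℝ)
    {c' : ℝ} (hc'0 : 0 < c')
    (heig : ∀ s (v : ι → ℝ), c' * (∑ j, v j ^ 2)
      ≤ ∑ j, v j * Matrix.mulVec (c.gram Φ s) v j)
    (s : 𝒮) : IsUnit (c.gram Φ s).det := by
  rw [isUnit_iff_ne_zero]
  intro hdet
  obtain ⟨v, hv, hmv⟩ := (Matrix.exists_mulVec_eq_zero_iff).2 hdet
  have h2 := heig s v
  rw [hmv] at h2
  simp only [Pi.zero_apply, mul_zero, Finset.sum_const_zero] at h2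
  obtain ⟨j, hj⟩ : ∃ j, v j ≠ 0 := Function.ne_iff.1 hv
  have hpos : 0 < ∑ i, v i ^ 2 :=
    Finset.sum_pos' (fun i _ => sq_nonneg _) ⟨j, Finset.mem_univ j, by positivity⟩
  nlinarith

end Helpers3
section Helpers4
set_option linter.unusedSectionVars false

open CARPop MeasureTheory

variable {Ω : Type*} [MeasurableSpace Ω] {𝒮 : Type*} [Fintype 𝒮] [MeasurableSpace 𝒮]
    [MeasurableSingletonClass 𝒮] {d : ℕ} {ι : Type*} [Fintype ι] [DecidableEq ι]

lemma memL2_Y1 (c : CARPop Ω 𝒮 d) (hc : c.PopAssumptions) : MemLp c.Y1 2 c.P :=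
  (memLp_two_iff_integrable_sq hc.mY1.aestronglyMeasurable).2 hc.intY1sq

lemma memL2_Y0 (c : CARPop Ω 𝒮 d) (hc : c.PopAssumptions) : MemLp c.Y0 2 c.P :=
  (memLp_two_iff_integrable_sq hc.mY0.aestronglyMeasurable).2 hc.intY0sq

lemma da_bin (c : CARPop Ω 𝒮 d) (hc : c.PopAssumptions) (a : Bool) (ω : Ω) :
    c.Da a ω = 0 ∨ c.Da a ω = 1 := by
  cases a
  · simpa [CARPop.Da] using hc.d0Bin ω
  · simpa [CARPop.Da] using hc.d1Bin ω

lemma da_meas (c : CARPop Ω 𝒮 d) (hc : c.PopAssumptions) (a : Bool) :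
    Measurable (c.Da a) := by
  cases a
  · exact hc.mD0
  · exact hc.mD1

lemma memL2_Da (c : CARPop Ω 𝒮 d) (hc : c.PopAssumptions) (a : Bool) :
    MemLp (c.Da a) 2 c.P := by
  haveI := hc.prob
  refine MemLp.of_bound (da_meas c hc a).aestronglyMeasurable 1
    (Filter.Eventually.of_forall fun ω => ?_)
  rcases da_bin c hc a ω with h | h <;> simp [h]

lemma ya_meas (c : CARPop Ω 𝒮 d) (hc : c.PopAssumptions) (a : Bool) :
    Measurable (c.Ya a) := by
  unfold CARPop.Ya
  exact (hc.mY1.mul (da_meas c hc a)).add (hc.mY0.mul (measurable_const.sub (da_meas c hc a)))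

lemma memL2_Ya (c : CARPop Ω 𝒮 d) (hc : c.PopAssumptions) (a : Bool) :
    MemLp (c.Ya a) 2 c.P := by
  haveI := hc.prob
  have hg : MemLp (fun ω => |c.Y1 ω| + |c.Y0 ω|) 2 c.P :=
    ((memL2_Y1 c hc).abs).add ((memL2_Y0 c hc).abs)
  refine MemLp.of_le hg (ya_meas c hc a).aestronglyMeasurable
    (Filter.Eventually.of_forall fun ω => ?_)
  have h1 : c.Ya a ω = c.Y1 ω ∨ c.Ya a ω = c.Y0 ω := by
    rcases da_bin c hc a ω with h | h
    · right; simp [CARPop.Ya, h]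
    · left; simp [CARPop.Ya, h]
  have h2 : (0:ℝ) ≤ |c.Y1 ω| + |c.Y0 ω| := by positivity
  rcases h1 with h | h <;>
    rw [Real.norm_eq_abs, Real.norm_eq_abs, h, abs_of_nonneg h2]
  · linarith [abs_nonneg (c.Y0 ω), le_abs_self (c.Y1 ω), abs_nonneg (c.Y1 ω)]
  · linarith [abs_nonneg (c.Y1 ω), abs_nonneg (c.Y0 ω)]

/-- `tilt f` is in `L²` whenever `f` is. -/
lemma memL2_tilt (c : CARPop Ω 𝒮 d) (hc : c.PopAssumptions) {f : Ω → ℝ}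
    (hf : MemLp f 2 c.P) : MemLp (c.tilt f) 2 c.P := by
  have : c.tilt f = fun ω => f ω - (fun s => c.cEs s f) (c.S ω) := rfl
  rw [this]
  exact hf.sub (memL2_of_S c hc.prob hc.mS (fun s => c.cEs s f))

end Helpers4
section Helpers5
set_option linter.unusedSectionVars false
set_option maxHeartbeats 1000000

open CARPop MeasureTheory

variable {Ω : Type*} [MeasurableSpace Ω] {𝒮 : Type*} [Fintype 𝒮] [MeasurableSpace 𝒮]
    [MeasurableSingletonClass 𝒮] {d : ℕ} {ι : Type*} [Fintype ι] [DecidableEq ι]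

lemma tilt_linWM (c : CARPop Ω 𝒮 d) (hc : c.PopAssumptions)
    (Φ : 𝒮 → (Fin d → ℝ) → ι → ℝ)
    (hint : ∀ s j, IntegrableOn (fun ω => Φ s (c.X ω) j) (c.stratum s) c.P)
    (t : Bool → 𝒮 → ι → ℝ) (a : Bool) (ω : Ω) :
    c.tilt (c.wm (linWM Φ t) a) ω = ∑ j, c.psiTilt Φ (c.S ω) ω j * t a (c.S ω) j := by
  have hS := hc.mS
  set s := c.S ω with hs
  have h1 : c.cEs s (c.wm (linWM Φ t) a)
      = ∑ j, c.cEs s (fun ω' => Φ s (c.X ω') j) * t a s j := by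
    have h2 : c.cEs s (c.wm (linWM Φ t) a)
        = c.cEs s (fun ω' => ∑ j, Φ s (c.X ω') j * t a s j) :=
      cEs_congr c hS (fun ω' hω' => by
        simp only [CARPop.wm, CARPop.linWM, (mem_stratum c).1 hω'])
    rw [h2]
    unfold CARPop.cEs
    rw [integral_finset_sum _ (fun j _ => (hint s j).mul_const _), Finset.sum_div]
    exact Finset.sum_congr rfl fun j _ => by rw [integral_mul_const]; ring
  show c.wm (linWM Φ t) a ω - c.cES (c.wm (linWM Φ t) a) ω = _
  unfold CARPop.cES
  rw [← hs, h1]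
  unfold CARPop.wm CARPop.linWM CARPop.psiTilt
  rw [← Finset.sum_sub_distrib]
  exact Finset.sum_congr rfl fun j _ => by rw [← hs]; ring

lemma int_psiTilt_zero (c : CARPop Ω 𝒮 d) (hc : c.PopAssumptions)
    (Φ : 𝒮 → (Fin d → ℝ) → ι → ℝ) (s : 𝒮) (j : ι)
    (hint : IntegrableOn (fun ω => Φ s (c.X ω) j) (c.stratum s) c.P) :
    ∫ ω in c.stratum s, c.psiTilt Φ s ω j ∂c.P = 0 := by
  haveI := hc.prob
  unfold CARPop.psiTilt
  rw [integral_sub hint (integrableOn_const (ne_of_lt (measure_lt_top _ _))),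
    setIntegral_const, smul_eq_mul, measureReal_def]
  unfold CARPop.cEs
  rw [mul_comm, div_mul_cancel₀ _ (pStratum_pos c hc s).ne', sub_self]

lemma mulVec_gram_thetaL (c : CARPop Ω 𝒮 d) (Φ : 𝒮 → (Fin d → ℝ) → ι → ℝ)
    {c' : ℝ} (hc'0 : 0 < c')
    (heig : ∀ s (v : ι → ℝ), c' * (∑ j, v j ^ 2)
      ≤ ∑ j, v j * Matrix.mulVec (c.gram Φ s) v j) (a : Bool) (s : 𝒮) :
    (c.gram Φ s).mulVec (c.thetaL Φ a s)
      = fun j => c.cEs s (fun ω => c.psiTilt Φ s ω j * c.Ya a ω) := by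
  unfold CARPop.thetaL
  rw [Matrix.mulVec_mulVec, Matrix.mul_nonsing_inv _ (gram_unit c Φ hc'0 heig s),
    Matrix.one_mulVec]

lemma mulVec_gram_betaL (c : CARPop Ω 𝒮 d) (Φ : 𝒮 → (Fin d → ℝ) → ι → ℝ)
    {c' : ℝ} (hc'0 : 0 < c')
    (heig : ∀ s (v : ι → ℝ), c' * (∑ j, v j ^ 2)
      ≤ ∑ j, v j * Matrix.mulVec (c.gram Φ s) v j) (a : Bool) (s : 𝒮) :
    (c.gram Φ s).mulVec (c.betaL Φ a s)
      = fun j => c.cEs s (fun ω => c.psiTilt Φ s ω j * c.Da a ω) := by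
  unfold CARPop.betaL
  rw [Matrix.mulVec_mulVec, Matrix.mul_nonsing_inv _ (gram_unit c Φ hc'0 heig s),
    Matrix.one_mulVec]

/-- The normal equations: the residual of the optimal combined linear coefficient is
orthogonal (within stratum) to each centered regressor. -/
lemma normal_eq (c : CARPop Ω 𝒮 d) (hc : c.PopAssumptions)
    (Φ : 𝒮 → (Fin d → ℝ) → ι → ℝ) (hmeas : ∀ s, Measurable (Φ s))
    {c' : ℝ} (hc'0 : 0 < c')
    (heig : ∀ s (v : ι → ℝ), c' * (∑ j, v j ^ 2)
      ≤ ∑ j, v j * Matrix.mulVec (c.gram Φ s) v j)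
    (a : Bool) (s : 𝒮) (j : ι) :
    ∫ ω in c.stratum s, c.psiTilt Φ s ω j *
      ((∑ i, c.psiTilt Φ (c.S ω) ω i
          * (c.thetaL Φ a (c.S ω) i - c.tau * c.betaL Φ a (c.S ω) i))
        - (c.tilt (c.Ya a) ω - c.tau * c.tilt (c.Da a) ω)) ∂c.P = 0 := by
  haveI := hc.prob
  have hS := hc.mS; have hX := hc.mX
  set T := (c.P (c.stratum s)).toReal with hT
  have hT0 : T ≠ 0 := (pStratum_pos c hc s).ne'
  have hψ : ∀ i, MemLp (fun ω => c.psiTilt Φ s ω i) 2 (c.P.restrict (c.stratum s)) :=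
    fun i => psiTilt_memL2_restrict c hc hX Φ hmeas hc'0 heig s i
  have hYa : MemLp (c.Ya a) 2 (c.P.restrict (c.stratum s)) := (memL2_Ya c hc a).restrict _
  have hDa : MemLp (c.Da a) 2 (c.P.restrict (c.stratum s)) := (memL2_Da c hc a).restrict _
  have hcongr : ∀ ω ∈ c.stratum s,
      c.psiTilt Φ s ω j *
        ((∑ i, c.psiTilt Φ (c.S ω) ω i
            * (c.thetaL Φ a (c.S ω) i - c.tau * c.betaL Φ a (c.S ω) i))
          - (c.tilt (c.Ya a) ω - c.tau * c.tilt (c.Da a) ω))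
      = ((∑ i, (c.thetaL Φ a s i - c.tau * c.betaL Φ a s i)
            * (c.psiTilt Φ s ω j * c.psiTilt Φ s ω i))
          - c.psiTilt Φ s ω j * c.Ya a ω)
        + (c.tau * (c.psiTilt Φ s ω j * c.Da a ω)
            + (c.cEs s (c.Ya a) - c.tau * c.cEs s (c.Da a)) * c.psiTilt Φ s ω j) := by
    intro ω hω
    have hsω : c.S ω = s := (mem_stratum c).1 hω
    unfold CARPop.tilt CARPop.cES
    rw [hsω]
    have hsum : (∑ i, c.psiTilt Φ s ω i * (c.thetaL Φ a s i - c.tau * c.betaL Φ a s i))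
          * c.psiTilt Φ s ω j
        = ∑ i, (c.thetaL Φ a s i - c.tau * c.betaL Φ a s i)
            * (c.psiTilt Φ s ω j * c.psiTilt Φ s ω i) := by
      rw [Finset.sum_mul]
      exact Finset.sum_congr rfl fun i _ => by ring
    linear_combination hsum
  rw [setIntegral_congr_fun (stratum_meas c hS s) hcongr]
  have hintψψ : ∀ i, IntegrableOn
      (fun ω => c.psiTilt Φ s ω j * c.psiTilt Φ s ω i) (c.stratum s) c.P :=
    fun i => integrable_mul_L2 (hψ j) (hψ i)
  have hintA : IntegrableOn
      (fun ω => ∑ i, (c.thetaL Φ a s i - c.tau * c.betaL Φ a s i)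
        * (c.psiTilt Φ s ω j * c.psiTilt Φ s ω i)) (c.stratum s) c.P :=
    integrable_finset_sum _ fun i _ => (hintψψ i).const_mul _
  have hintY : IntegrableOn (fun ω => c.psiTilt Φ s ω j * c.Ya a ω) (c.stratum s) c.P :=
    integrable_mul_L2 (hψ j) hYa
  have hintD : IntegrableOn (fun ω => c.psiTilt Φ s ω j * c.Da a ω) (c.stratum s) c.P :=
    integrable_mul_L2 (hψ j) hDa
  have hintψ : IntegrableOn (fun ω => c.psiTilt Φ s ω j) (c.stratum s) c.P :=
    (hψ j).integrable one_le_two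
  have hint1 : IntegrableOn (fun ω =>
      (∑ i, (c.thetaL Φ a s i - c.tau * c.betaL Φ a s i)
        * (c.psiTilt Φ s ω j * c.psiTilt Φ s ω i))
      - c.psiTilt Φ s ω j * c.Ya a ω) (c.stratum s) c.P := hintA.sub hintY
  have hint2 : IntegrableOn (fun ω =>
      c.tau * (c.psiTilt Φ s ω j * c.Da a ω)
      + (c.cEs s (c.Ya a) - c.tau * c.cEs s (c.Da a)) * c.psiTilt Φ s ω j)
      (c.stratum s) c.P := (hintD.const_mul _).add (hintψ.const_mul _)
  have hint3 : IntegrableOn (fun ω =>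
      c.tau * (c.psiTilt Φ s ω j * c.Da a ω)) (c.stratum s) c.P := hintD.const_mul _
  have hint4 : IntegrableOn (fun ω =>
      (c.cEs s (c.Ya a) - c.tau * c.cEs s (c.Da a)) * c.psiTilt Φ s ω j)
      (c.stratum s) c.P := hintψ.const_mul _
  rw [integral_add hint1 hint2, integral_sub hintA hintY, integral_add hint3 hint4,
      integral_finset_sum _ (fun i _ => (hintψψ i).const_mul _)]
  simp only [integral_const_mul]
  rw [int_psiTilt_zero c hc Φ s j (phi_intOn c hc hX Φ hmeas hc'0 heig s j), mul_zero]
  have e1 : ∀ i, ∫ ω in c.stratum s, c.psiTilt Φ s ω j * c.psiTilt Φ s ω i ∂c.P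
      = c.gram Φ s j i * T := fun i => setIntegral_eq_cEs c hc s _
  have e2 : ∫ ω in c.stratum s, c.psiTilt Φ s ω j * c.Ya a ω ∂c.P
      = c.cEs s (fun ω => c.psiTilt Φ s ω j * c.Ya a ω) * T := setIntegral_eq_cEs c hc s _
  have e3 : ∫ ω in c.stratum s, c.psiTilt Φ s ω j * c.Da a ω ∂c.P
      = c.cEs s (fun ω => c.psiTilt Φ s ω j * c.Da a ω) * T := setIntegral_eq_cEs c hc s _
  simp only [e1, e2, e3]
  have hmv : ∑ i, c.gram Φ s j i * (c.thetaL Φ a s i - c.tau * c.betaL Φ a s i)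
      = c.cEs s (fun ω => c.psiTilt Φ s ω j * c.Ya a ω)
        - c.tau * c.cEs s (fun ω => c.psiTilt Φ s ω j * c.Da a ω) := by
    have h1 := congrFun (mulVec_gram_thetaL c Φ hc'0 heig a s) j
    have h2 := congrFun (mulVec_gram_betaL c Φ hc'0 heig a s) j
    simp only [Matrix.mulVec, dotProduct] at h1 h2
    rw [← h1, ← h2, Finset.mul_sum, ← Finset.sum_sub_distrib]
    exact Finset.sum_congr rfl fun i _ => by ring
  have hsum2 : ∑ i, (c.thetaL Φ a s i - c.tau * c.betaL Φ a s i) * (c.gram Φ s j i * T)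
      = (∑ i, c.gram Φ s j i * (c.thetaL Φ a s i - c.tau * c.betaL Φ a s i)) * T := by
    rw [Finset.sum_mul]
    exact Finset.sum_congr rfl fun i _ => by ring
  rw [hsum2, hmv]
  ring

end Helpers5
section Helpers6
set_option linter.unusedSectionVars false
set_option maxHeartbeats 1000000

open CARPop MeasureTheory

variable {Ω : Type*} [MeasurableSpace Ω] {𝒮 : Type*} [Fintype 𝒮] [MeasurableSpace 𝒮]
    [MeasurableSingletonClass 𝒮] {d : ℕ} {ι : Type*} [Fintype ι] [DecidableEq ι]

lemma compS_aesm (c : CARPop Ω 𝒮 d) (hS : Measurable c.S) (g : 𝒮 → ℝ) :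
    AEStronglyMeasurable (fun ω => g (c.S ω)) c.P :=
  (measurable_compS c hS (fun s _ => g s) (fun _ => measurable_const)).aestronglyMeasurable

/-- `∫ g(S)·f²` is finite for `f ∈ L²`. -/
lemma int_weight_sq (c : CARPop Ω 𝒮 d) (hS : Measurable c.S) (g : 𝒮 → ℝ) {f : Ω → ℝ}
    (hf : MemLp f 2 c.P) : Integrable (fun ω => g (c.S ω) * f ω ^ 2) c.P := by
  have h := (integrable_mul_L2 hf hf).bdd_mul (compS_aesm c hS g)
    (c := ∑ s, |g s|) (Filter.Eventually.of_forall fun x => by simpa [Real.norm_eq_abs] using abs_le_sumS g (c.S x))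
  exact h.congr (Filter.Eventually.of_forall fun ω => by simp [pow_two])

lemma int_weight_mul (c : CARPop Ω 𝒮 d) (hS : Measurable c.S) (g : 𝒮 → ℝ) {f f' : Ω → ℝ}
    (hf : MemLp f 2 c.P) (hf' : MemLp f' 2 c.P) :
    Integrable (fun ω => g (c.S ω) * (f ω * f' ω)) c.P :=
  (integrable_mul_L2 hf hf').bdd_mul (compS_aesm c hS g)
    (c := ∑ s, |g s|) (Filter.Eventually.of_forall fun x => by simpa [Real.norm_eq_abs] using abs_le_sumS g (c.S x))

/-- Key orthogonality: the residual of the optimal linear adjustment integrates to zero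
against any linear combination of the centered regressors. -/
lemma int_resid_zero (c : CARPop Ω 𝒮 d) (hc : c.PopAssumptions)
    (Φ : 𝒮 → (Fin d → ℝ) → ι → ℝ) (hmeas : ∀ s, Measurable (Φ s))
    {c' : ℝ} (hc'0 : 0 < c')
    (heig : ∀ s (v : ι → ℝ), c' * (∑ j, v j ^ 2)
      ≤ ∑ j, v j * Matrix.mulVec (c.gram Φ s) v j)
    (a : Bool) (δ : 𝒮 → ι → ℝ)
    (hK : MemLp (fun ω => (∑ i, c.psiTilt Φ (c.S ω) ω i
        * (c.thetaL Φ a (c.S ω) i - c.tau * c.betaL Φ a (c.S ω) i))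
        - (c.tilt (c.Ya a) ω - c.tau * c.tilt (c.Da a) ω)) 2 c.P)
    (hE : MemLp (fun ω => ∑ j, c.psiTilt Φ (c.S ω) ω j * δ (c.S ω) j) 2 c.P) :
    ∫ ω, ((∑ i, c.psiTilt Φ (c.S ω) ω i
        * (c.thetaL Φ a (c.S ω) i - c.tau * c.betaL Φ a (c.S ω) i))
        - (c.tilt (c.Ya a) ω - c.tau * c.tilt (c.Da a) ω))
      * (∑ j, c.psiTilt Φ (c.S ω) ω j * δ (c.S ω) j) ∂c.P = 0 := by
  haveI := hc.prob
  have hS := hc.mS; have hX := hc.mX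
  set K : Ω → ℝ := fun ω => (∑ i, c.psiTilt Φ (c.S ω) ω i
      * (c.thetaL Φ a (c.S ω) i - c.tau * c.betaL Φ a (c.S ω) i))
      - (c.tilt (c.Ya a) ω - c.tau * c.tilt (c.Da a) ω) with hKdef
  have hint : Integrable (fun ω => K ω * (∑ j, c.psiTilt Φ (c.S ω) ω j * δ (c.S ω) j)) c.P :=
    integrable_mul_L2 hK hE
  rw [integral_strata c hS _ hint]
  refine Finset.sum_eq_zero fun s _ => ?_
  have hcongr : ∀ ω ∈ c.stratum s,
      K ω * (∑ j, c.psiTilt Φ (c.S ω) ω j * δ (c.S ω) j)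
        = ∑ j, δ s j * (c.psiTilt Φ s ω j * K ω) := by
    intro ω hω
    have hsω : c.S ω = s := (mem_stratum c).1 hω
    calc K ω * (∑ j, c.psiTilt Φ (c.S ω) ω j * δ (c.S ω) j)
        = ∑ j, K ω * (c.psiTilt Φ (c.S ω) ω j * δ (c.S ω) j) := Finset.mul_sum _ _ _
      _ = ∑ j, δ s j * (c.psiTilt Φ s ω j * K ω) := by
          rw [hsω]
          exact Finset.sum_congr rfl fun j _ => by ring
  rw [setIntegral_congr_fun (stratum_meas c hS s) hcongr,
    integral_finset_sum _ (fun j _ => (integrable_mul_L2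
      (psiTilt_memL2_restrict c hc hX Φ hmeas hc'0 heig s j) (hK.restrict _)).const_mul _)]
  refine Finset.sum_eq_zero fun j _ => ?_
  rw [integral_const_mul, hKdef]
  rw [normal_eq c hc Φ hmeas hc'0 heig a s j, mul_zero]

end Helpers6
section Scalar

/-- decomposition of the weighted square loss into base, cross and quadratic terms. -/
lemma master_id (pp h1 h0 e1 e0 F G : ℝ) (hp : pp ≠ 0) (hq : 1 - pp ≠ 0) :
    pp * (((1 - 1/pp) * h1 - h0 + F/pp) + ((1 - 1/pp) * e1 - e0))^2
      + (1 - pp) * (((1/(1-pp) - 1) * h0 + h1 - G/(1-pp)) + ((1/(1-pp) - 1) * e0 + e1))^2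
    = (pp * ((1 - 1/pp) * h1 - h0 + F/pp)^2
        + (1-pp) * ((1/(1-pp) - 1) * h0 + h1 - G/(1-pp))^2)
      + 2 * (((h0 - G) * (e1 + pp/(1-pp) * e0) + (h1 - F) * ((1-pp)/pp * e1 + e0)))
      + (pp * ((1 - 1/pp) * e1 - e0)^2 + (1-pp) * ((1/(1-pp) - 1) * e0 + e1)^2) := by
  field_simp
  ring

lemma key_sub (u1 u0 v1 v0 h1 h0 e1 e0 W D τ pp : ℝ)
    (H1 : h1 + e1 = u1 - τ * v1) (H0 : h0 + e0 = u0 - τ * v0) :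
    ((1 - 1/pp) * u1 - u0 + W/pp) - τ * ((1 - 1/pp) * v1 - v0 + D/pp)
      = ((1 - 1/pp) * h1 - h0 + (W - τ*D)/pp) + ((1 - 1/pp) * e1 - e0) := by
  have hu1 : u1 = h1 + e1 + τ * v1 := by linarith
  have hu0 : u0 = h0 + e0 + τ * v0 := by linarith
  rw [hu1, hu0]; ring

lemma key_sub0 (u1 u0 v1 v0 h1 h0 e1 e0 Z D τ pp : ℝ)
    (H1 : h1 + e1 = u1 - τ * v1) (H0 : h0 + e0 = u0 - τ * v0) :
    ((1/(1-pp) - 1) * u0 + u1 - Z/(1-pp)) - τ * ((1/(1-pp) - 1) * v0 + v1 - D/(1-pp))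
      = ((1/(1-pp) - 1) * h0 + h1 - (Z - τ*D)/(1-pp)) + ((1/(1-pp) - 1) * e0 + e1) := by
  have hu1 : u1 = h1 + e1 + τ * v1 := by linarith
  have hu0 : u0 = h0 + e0 + τ * v0 := by linarith
  rw [hu1, hu0]; ring

end Scalar
section MainIneq
set_option linter.unusedSectionVars false
set_option maxHeartbeats 4000000

open CARPop MeasureTheory

variable {Ω : Type*} [MeasurableSpace Ω] {𝒮 : Type*} [Fintype 𝒮] [MeasurableSpace 𝒮]
    [MeasurableSingletonClass 𝒮] {d : ℕ} {ι : Type*} [Fintype ι] [DecidableEq ι]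

/-- Master lemma: the optimal linear adjustment based on `Φ` is weakly more efficient
than any working models whose tilts are linear in the centered `Φ`. -/
lemma main_ineq (c : CARPop Ω 𝒮 d) (hc : c.PopAssumptions)
    (Φ : 𝒮 → (Fin d → ℝ) → ι → ℝ) (hmeas : ∀ s, Measurable (Φ s))
    {c' : ℝ} (hc'0 : 0 < c')
    (heig : ∀ s (v : ι → ℝ), c' * (∑ j, v j ^ 2)
      ≤ ∑ j, v j * Matrix.mulVec (c.gram Φ s) v j)
    (mY mD : Bool → 𝒮 → (Fin d → ℝ) → ℝ)
    (ty tb : Bool → 𝒮 → ι → ℝ)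
    (hY : ∀ a ω, c.tilt (c.wm mY a) ω = ∑ j, c.psiTilt Φ (c.S ω) ω j * ty a (c.S ω) j)
    (hD : ∀ a ω, c.tilt (c.wm mD a) ω = ∑ j, c.psiTilt Φ (c.S ω) ω j * tb a (c.S ω) j) :
    c.sigmaSqLin Φ (c.thetaL Φ) (c.betaL Φ) ≤ c.sigmaSq mY mD := by
  haveI := hc.prob
  have hS := hc.mS; have hX := hc.mX
  obtain ⟨cc, hcc0, hcch, hccr⟩ := hc.piRange
  have hp0 : ∀ ω, c.piS (c.S ω) ≠ 0 := fun ω => (lt_trans hcc0 (hccr _).1).ne'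
  have hp1 : ∀ ω, 1 - c.piS (c.S ω) ≠ 0 := fun ω => by
    have := (hccr (c.S ω)).2; intro h; nlinarith
  have hp0' : ∀ ω, 0 ≤ c.piS (c.S ω) := fun ω => le_of_lt (lt_trans hcc0 (hccr _).1)
  have hp1' : ∀ ω, 0 ≤ 1 - c.piS (c.S ω) := fun ω => by
    have := (hccr (c.S ω)).2; nlinarith
  -- all the function-level abbreviations
  set γv : Bool → 𝒮 → ι → ℝ :=
    fun a s i => c.thetaL Φ a s i - c.tau * c.betaL Φ a s i with hγv
  set δv : Bool → 𝒮 → ι → ℝ :=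
    fun a s i => (ty a s i - c.tau * tb a s i) - γv a s i with hδv
  set hst : Bool → Ω → ℝ :=
    fun a ω => ∑ j, c.psiTilt Φ (c.S ω) ω j * γv a (c.S ω) j with hhst
  set ef : Bool → Ω → ℝ :=
    fun a ω => ∑ j, c.psiTilt Φ (c.S ω) ω j * δv a (c.S ω) j with hef
  set FG : Bool → Ω → ℝ :=
    fun a ω => c.tilt (c.Ya a) ω - c.tau * c.tilt (c.Da a) ω with hFG
  set X1s : Ω → ℝ := fun ω =>
    (1 - 1 / c.piS (c.S ω)) * hst true ω - hst false ω
      + FG true ω / c.piS (c.S ω) with hX1s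
  set X0s : Ω → ℝ := fun ω =>
    (1 / (1 - c.piS (c.S ω)) - 1) * hst false ω + hst true ω
      - FG false ω / (1 - c.piS (c.S ω)) with hX0s
  set A1 : Ω → ℝ := fun ω =>
    (1 - 1 / c.piS (c.S ω)) * ef true ω - ef false ω with hA1
  set B0 : Ω → ℝ := fun ω =>
    (1 / (1 - c.piS (c.S ω)) - 1) * ef false ω + ef true ω with hB0
  set Xc : Ω → ℝ := fun ω =>
    (hst false ω - FG false ω)
        * (ef true ω + c.piS (c.S ω) / (1 - c.piS (c.S ω)) * ef false ω)
      + (hst true ω - FG true ω)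
        * ((1 - c.piS (c.S ω)) / c.piS (c.S ω) * ef true ω + ef false ω) with hXc
  set Qd : Ω → ℝ := fun ω =>
    c.piS (c.S ω) * A1 ω ^ 2 + (1 - c.piS (c.S ω)) * B0 ω ^ 2 with hQd
  -- L² memberships
  have hψS : ∀ j, MemLp (fun ω => c.psiTilt Φ (c.S ω) ω j) 2 c.P := by
    intro j
    have h1 := phi_memL2 c hc Φ hmeas hc'0 heig j
    have h2 : (fun ω => c.psiTilt Φ (c.S ω) ω j)
        = fun ω => Φ (c.S ω) (c.X ω) j
          - (fun s => c.cEs s (fun ω' => Φ s (c.X ω') j)) (c.S ω) := rfl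
    rw [h2]
    exact h1.sub (memL2_of_S c hc.prob hS (fun s => c.cEs s (fun ω' => Φ s (c.X ω') j)))
  have hhstL2 : ∀ a, MemLp (hst a) 2 c.P := by
    intro a
    rw [hhst]
    exact memLp_finset_sum _ (fun j _ => memL2_mulS' c hS (fun s => γv a s j) (hψS j))
  have hefL2 : ∀ a, MemLp (ef a) 2 c.P := by
    intro a
    rw [hef]
    exact memLp_finset_sum _ (fun j _ => memL2_mulS' c hS (fun s => δv a s j) (hψS j))
  have hFGL2 : ∀ a, MemLp (FG a) 2 c.P := by
    intro a
    rw [hFG]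
    exact (memL2_tilt c hc (memL2_Ya c hc a)).sub
      ((memL2_tilt c hc (memL2_Da c hc a)).const_mul c.tau)
  have hX1sL2 : MemLp X1s 2 c.P := by
    rw [hX1s]
    exact ((memL2_mulS c hS (fun s => 1 - 1 / c.piS s) (hhstL2 true)).sub
      (hhstL2 false)).add (memL2_divS c hS c.piS (hFGL2 true))
  have hX0sL2 : MemLp X0s 2 c.P := by
    rw [hX0s]
    exact ((memL2_mulS c hS (fun s => 1 / (1 - c.piS s) - 1) (hhstL2 false)).add
      (hhstL2 true)).sub (memL2_divS c hS (fun s => 1 - c.piS s) (hFGL2 false))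
  have hA1L2 : MemLp A1 2 c.P := by
    rw [hA1]
    exact (memL2_mulS c hS (fun s => 1 - 1 / c.piS s) (hefL2 true)).sub (hefL2 false)
  have hB0L2 : MemLp B0 2 c.P := by
    rw [hB0]
    exact (memL2_mulS c hS (fun s => 1 / (1 - c.piS s) - 1) (hefL2 false)).add (hefL2 true)
  have hXA : MemLp (fun ω => X1s ω + A1 ω) 2 c.P := hX1sL2.add hA1L2
  have hXB : MemLp (fun ω => X0s ω + B0 ω) 2 c.P := hX0sL2.add hB0L2
  -- pointwise identities
  have hsplit : ∀ a ω, hst a ω + ef a ω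
      = (∑ j, c.psiTilt Φ (c.S ω) ω j * ty a (c.S ω) j)
        - c.tau * (∑ j, c.psiTilt Φ (c.S ω) ω j * tb a (c.S ω) j) := by
    intro a ω
    rw [hhst, hef, Finset.mul_sum, ← Finset.sum_sub_distrib, ← Finset.sum_add_distrib]
    refine Finset.sum_congr rfl fun j _ => ?_
    rw [hδv, hγv]; ring
  have h1eq : ∀ ω, c.Xi1 mY mD ω = X1s ω + A1 ω := by
    intro ω
    simp only [CARPop.Xi1, CARPop.W, hY, hD, hX1s, hA1, hFG]
    exact key_sub _ _ _ _ _ _ _ _ _ _ _ _ (hsplit true ω) (hsplit false ω)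
  have h0eq : ∀ ω, c.Xi0 mY mD ω = X0s ω + B0 ω := by
    intro ω
    simp only [CARPop.Xi0, CARPop.Z, hY, hD, hX0s, hB0, hFG]
    exact key_sub0 _ _ _ _ _ _ _ _ _ _ _ _ (hsplit true ω) (hsplit false ω)
  have hmaster : ∀ ω,
      c.piS (c.S ω) * (X1s ω + A1 ω) ^ 2 + (1 - c.piS (c.S ω)) * (X0s ω + B0 ω) ^ 2
        = (c.piS (c.S ω) * X1s ω ^ 2 + (1 - c.piS (c.S ω)) * X0s ω ^ 2)
          + (2 * Xc ω + Qd ω) := by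
    intro ω
    simp only [hX1s, hX0s, hA1, hB0, hXc, hQd]
    have := master_id (c.piS (c.S ω)) (hst true ω) (hst false ω) (ef true ω) (ef false ω)
      (FG true ω) (FG false ω) (hp0 ω) (hp1 ω)
    linarith [this]
  -- integrability
  have hb1 : Integrable (fun ω => c.piS (c.S ω) * X1s ω ^ 2) c.P :=
    int_weight_sq c hS c.piS hX1sL2
  have hb0 : Integrable (fun ω => (1 - c.piS (c.S ω)) * X0s ω ^ 2) c.P :=
    int_weight_sq c hS (fun s => 1 - c.piS s) hX0sL2
  have hc1 : Integrable (fun ω => c.piS (c.S ω) * (X1s ω + A1 ω) ^ 2) c.P :=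
    int_weight_sq c hS c.piS hXA
  have hc0 : Integrable (fun ω => (1 - c.piS (c.S ω)) * (X0s ω + B0 ω) ^ 2) c.P :=
    int_weight_sq c hS (fun s => 1 - c.piS s) hXB
  have hE0L2 : MemLp (fun ω =>
      ef true ω + c.piS (c.S ω) / (1 - c.piS (c.S ω)) * ef false ω) 2 c.P :=
    (hefL2 true).add (memL2_mulS c hS (fun s => c.piS s / (1 - c.piS s)) (hefL2 false))
  have hE1L2 : MemLp (fun ω =>
      (1 - c.piS (c.S ω)) / c.piS (c.S ω) * ef true ω + ef false ω) 2 c.P :=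
    (memL2_mulS c hS (fun s => (1 - c.piS s) / c.piS s) (hefL2 true)).add (hefL2 false)
  have hXcInt : Integrable Xc c.P := by
    rw [hXc]
    exact (integrable_mul_L2 ((hhstL2 false).sub (hFGL2 false)) hE0L2).add
      (integrable_mul_L2 ((hhstL2 true).sub (hFGL2 true)) hE1L2)
  have hQdInt : Integrable Qd c.P := by
    rw [hQd]
    exact (int_weight_sq c hS c.piS hA1L2).add
      (int_weight_sq c hS (fun s => 1 - c.piS s) hB0L2)
  have hQdPos : 0 ≤ ∫ ω, Qd ω ∂c.P := by
    refine integral_nonneg fun ω => ?_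
    rw [hQd]
    have := hp0' ω; have := hp1' ω
    positivity
  -- the cross integral vanishes
  have hXcZero : ∫ ω, Xc ω ∂c.P = 0 := by
    have hEq0 : ∀ ω : Ω, ef true ω + c.piS (c.S ω) / (1 - c.piS (c.S ω)) * ef false ω
        = ∑ j, c.psiTilt Φ (c.S ω) ω j *
            (fun s i => δv true s i + c.piS s / (1 - c.piS s) * δv false s i) (c.S ω) j := by
      intro ω
      rw [hef, Finset.mul_sum, ← Finset.sum_add_distrib]
      exact Finset.sum_congr rfl fun j _ => by ring
    have hEq1 : ∀ ω : Ω, (1 - c.piS (c.S ω)) / c.piS (c.S ω) * ef true ω + ef false ω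
        = ∑ j, c.psiTilt Φ (c.S ω) ω j *
            (fun s i => (1 - c.piS s) / c.piS s * δv true s i + δv false s i) (c.S ω) j := by
      intro ω
      rw [hef, Finset.mul_sum, ← Finset.sum_add_distrib]
      exact Finset.sum_congr rfl fun j _ => by ring
    have hKL2 : ∀ a : Bool, MemLp (fun ω => (∑ i, c.psiTilt Φ (c.S ω) ω i
        * (c.thetaL Φ a (c.S ω) i - c.tau * c.betaL Φ a (c.S ω) i))
        - (c.tilt (c.Ya a) ω - c.tau * c.tilt (c.Da a) ω)) 2 c.P := by
      intro a
      have := (hhstL2 a).sub (hFGL2 a)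
      simpa only [hhst, hFG, hγv, Pi.sub_def] using this
    have hz0 := int_resid_zero c hc Φ hmeas hc'0 heig false
      (fun s i => δv true s i + c.piS s / (1 - c.piS s) * δv false s i) (hKL2 false)
      (MemLp.ae_eq (Filter.Eventually.of_forall fun ω => (hEq0 ω)) hE0L2)
    have hz1 := int_resid_zero c hc Φ hmeas hc'0 heig true
      (fun s i => (1 - c.piS s) / c.piS s * δv true s i + δv false s i) (hKL2 true)
      (MemLp.ae_eq (Filter.Eventually.of_forall fun ω => (hEq1 ω)) hE1L2)
    have hexp : ∀ ω, Xc ω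
        = ((∑ i, c.psiTilt Φ (c.S ω) ω i
            * (c.thetaL Φ false (c.S ω) i - c.tau * c.betaL Φ false (c.S ω) i))
            - (c.tilt (c.Ya false) ω - c.tau * c.tilt (c.Da false) ω))
          * (∑ j, c.psiTilt Φ (c.S ω) ω j *
              (fun s i => δv true s i + c.piS s / (1 - c.piS s) * δv false s i) (c.S ω) j)
        + ((∑ i, c.psiTilt Φ (c.S ω) ω i
            * (c.thetaL Φ true (c.S ω) i - c.tau * c.betaL Φ true (c.S ω) i))
            - (c.tilt (c.Ya true) ω - c.tau * c.tilt (c.Da true) ω))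
          * (∑ j, c.psiTilt Φ (c.S ω) ω j *
              (fun s i => (1 - c.piS s) / c.piS s * δv true s i + δv false s i) (c.S ω) j) := by
      intro ω
      rw [hXc, ← hEq0 ω, ← hEq1 ω]
    have hint0 : Integrable (fun ω => ((∑ i, c.psiTilt Φ (c.S ω) ω i
        * (c.thetaL Φ false (c.S ω) i - c.tau * c.betaL Φ false (c.S ω) i))
        - (c.tilt (c.Ya false) ω - c.tau * c.tilt (c.Da false) ω))
        * (∑ j, c.psiTilt Φ (c.S ω) ω j *
            (fun s i => δv true s i + c.piS s / (1 - c.piS s) * δv false s i) (c.S ω) j)) c.P :=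
      integrable_mul_L2 (hKL2 false)
        (MemLp.ae_eq (Filter.Eventually.of_forall fun ω => hEq0 ω) hE0L2)
    have hint1 : Integrable (fun ω => ((∑ i, c.psiTilt Φ (c.S ω) ω i
        * (c.thetaL Φ true (c.S ω) i - c.tau * c.betaL Φ true (c.S ω) i))
        - (c.tilt (c.Ya true) ω - c.tau * c.tilt (c.Da true) ω))
        * (∑ j, c.psiTilt Φ (c.S ω) ω j *
            (fun s i => (1 - c.piS s) / c.piS s * δv true s i + δv false s i) (c.S ω) j)) c.P :=
      integrable_mul_L2 (hKL2 true)
        (MemLp.ae_eq (Filter.Eventually.of_forall fun ω => hEq1 ω) hE1L2)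
    calc ∫ ω, Xc ω ∂c.P = _ := integral_congr_ae (Filter.Eventually.of_forall hexp)
      _ = 0 := by rw [integral_add hint0 hint1, hz0, hz1, add_zero]
  -- sigma expressions
  have e_c1 : c.sigma1Sq mY mD = ∫ ω, c.piS (c.S ω) * (X1s ω + A1 ω) ^ 2 ∂c.P := by
    refine integral_congr_ae (Filter.Eventually.of_forall fun ω => ?_)
    simp only [h1eq]
  have e_c0 : c.sigma0Sq mY mD = ∫ ω, (1 - c.piS (c.S ω)) * (X0s ω + B0 ω) ^ 2 ∂c.P := by
    refine integral_congr_ae (Filter.Eventually.of_forall fun ω => ?_)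
    simp only [h0eq]
  -- tilt of the optimally adjusted linear working models
  have hintΦ : ∀ s j, IntegrableOn (fun ω => Φ s (c.X ω) j) (c.stratum s) c.P :=
    fun s j => phi_intOn c hc hX Φ hmeas hc'0 heig s j
  have hoptsplit : ∀ a ω, hst a ω + 0
      = (∑ j, c.psiTilt Φ (c.S ω) ω j * c.thetaL Φ a (c.S ω) j)
        - c.tau * (∑ j, c.psiTilt Φ (c.S ω) ω j * c.betaL Φ a (c.S ω) j) := by
    intro a ω
    rw [add_zero, hhst, Finset.mul_sum, ← Finset.sum_sub_distrib]
    exact Finset.sum_congr rfl fun j _ => by rw [hγv]; ring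
  have hopt1 : ∀ ω, c.Xi1 (linWM Φ (c.thetaL Φ)) (linWM Φ (c.betaL Φ)) ω = X1s ω := by
    intro ω
    simp only [CARPop.Xi1, CARPop.W,
      tilt_linWM c hc Φ hintΦ (c.thetaL Φ), tilt_linWM c hc Φ hintΦ (c.betaL Φ)]
    rw [key_sub _ _ _ _ _ _ _ _ _ _ _ _ (hoptsplit true ω) (hoptsplit false ω)]
    rw [hX1s, hFG]
    ring
  have hopt0 : ∀ ω, c.Xi0 (linWM Φ (c.thetaL Φ)) (linWM Φ (c.betaL Φ)) ω = X0s ω := by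
    intro ω
    simp only [CARPop.Xi0, CARPop.Z,
      tilt_linWM c hc Φ hintΦ (c.thetaL Φ), tilt_linWM c hc Φ hintΦ (c.betaL Φ)]
    rw [key_sub0 _ _ _ _ _ _ _ _ _ _ _ _ (hoptsplit true ω) (hoptsplit false ω)]
    rw [hX0s, hFG]
    ring
  have e_o1 : c.sigma1Sq (linWM Φ (c.thetaL Φ)) (linWM Φ (c.betaL Φ))
      = ∫ ω, c.piS (c.S ω) * X1s ω ^ 2 ∂c.P := by
    refine integral_congr_ae (Filter.Eventually.of_forall fun ω => ?_)
    simp only [hopt1]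
  have e_o0 : c.sigma0Sq (linWM Φ (c.thetaL Φ)) (linWM Φ (c.betaL Φ))
      = ∫ ω, (1 - c.piS (c.S ω)) * X0s ω ^ 2 ∂c.P := by
    refine integral_congr_ae (Filter.Eventually.of_forall fun ω => ?_)
    simp only [hopt0]
  -- the numerator inequality
  have hnum : c.sigma1Sq (linWM Φ (c.thetaL Φ)) (linWM Φ (c.betaL Φ))
      + c.sigma0Sq (linWM Φ (c.thetaL Φ)) (linWM Φ (c.betaL Φ))
      ≤ c.sigma1Sq mY mD + c.sigma0Sq mY mD := by
    rw [e_c1, e_c0, e_o1, e_o0]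
    have hsum : ∫ ω, c.piS (c.S ω) * (X1s ω + A1 ω) ^ 2 ∂c.P
        + ∫ ω, (1 - c.piS (c.S ω)) * (X0s ω + B0 ω) ^ 2 ∂c.P
        = (∫ ω, (c.piS (c.S ω) * X1s ω ^ 2 + (1 - c.piS (c.S ω)) * X0s ω ^ 2) ∂c.P)
          + (2 * ∫ ω, Xc ω ∂c.P + ∫ ω, Qd ω ∂c.P) := by
      have hbase : Integrable (fun ω => c.piS (c.S ω) * X1s ω ^ 2
          + (1 - c.piS (c.S ω)) * X0s ω ^ 2) c.P := hb1.add hb0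
      have hrest2 : Integrable (fun ω => 2 * Xc ω) c.P := hXcInt.const_mul 2
      have hrest : Integrable (fun ω => 2 * Xc ω + Qd ω) c.P := hrest2.add hQdInt
      rw [← integral_add hc1 hc0]
      rw [integral_congr_ae (Filter.Eventually.of_forall hmaster)]
      rw [integral_add hbase hrest, integral_add hrest2 hQdInt, integral_const_mul]
    rw [integral_add hb1 hb0] at hsum
    rw [hXcZero] at hsum
    linarith [hQdPos, hsum]
  -- conclusion
  show (c.sigma1Sq _ _ + c.sigma0Sq _ _ + c.sigma2Sq) / (c.P c.compliers).toReal ^ 2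
      ≤ (c.sigma1Sq _ _ + c.sigma0Sq _ _ + c.sigma2Sq) / (c.P c.compliers).toReal ^ 2
  rw [div_eq_mul_inv, div_eq_mul_inv]
  refine mul_le_mul_of_nonneg_right (by linarith [hnum]) ?_
  exact inv_nonneg.2 (sq_nonneg _)

end MainIneq

open CARPop in
/-- The further-improved adjustment (optimal linear adjustment based on
the augmented regressor `Φ`, i.e. `(θᶠ, βᶠ)`) is weakly more efficient than the optimal
linear adjustment, than the nonlinear (logistic) adjustment, and than no adjustment:
`σ²_{lin,Φ}(θᶠ,βᶠ) ≤ min{σ²_lin(θᴸ,βᴸ), σ²_NL, σ²_lin(0,0)}`. -/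
theorem stmt5 {Ω : Type*} [MeasurableSpace Ω] {𝒮 : Type*} [Fintype 𝒮] [MeasurableSpace 𝒮]
    [MeasurableSingletonClass 𝒮] {d k : ℕ}
    (c : CARPop Ω 𝒮 d) (hc : PopAssumptions c)
    (Ψ : 𝒮 → (Fin d → ℝ) → Fin k → ℝ) (hΨ : c.PsiRegular Ψ)
    -- moment bound and invertibility for the intercept-augmented regressor `Ψ̊`
    (hRingMom : ∃ q C : ℝ, 2 < q ∧ ∀ s : 𝒮,
      c.cEs s (fun ω => (∑ j, (ringPsi Ψ (c.S ω) (c.X ω) j) ^ 2) ^ (q / 2)) ≤ C)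
    (hGram0 : ∀ s, IsUnit (c.gram0 Ψ s).det)
    -- `βMLE a s` is the unique maximizer of the population logistic log-likelihood
    (βMLE : Bool → 𝒮 → Fin (k + 1) → ℝ)
    (hMLE : ∀ (a : Bool) (s : 𝒮),
      (∀ b, c.logLik Ψ a s b ≤ c.logLik Ψ a s (βMLE a s)) ∧
      (∀ b, c.logLik Ψ a s b = c.logLik Ψ a s (βMLE a s) → b = βMLE a s))
    -- the augmented regressor `Φ` satisfies the linear-adjustment regularity conditions
    (hΦ : c.PsiRegular (Phi Ψ βMLE)) :
    c.sigmaSqLin (Phi Ψ βMLE) (c.thetaL (Phi Ψ βMLE)) (c.betaL (Phi Ψ βMLE))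
        ≤ c.sigmaSqLin Ψ (c.thetaL Ψ) (c.betaL Ψ) ∧
    c.sigmaSqLin (Phi Ψ βMLE) (c.thetaL (Phi Ψ βMLE)) (c.betaL (Phi Ψ βMLE))
        ≤ c.sigmaSq (fun a s x => ∑ j, ringPsi Ψ s x j * c.thetaOLS Ψ a s j)
            (fun a s x => logistic (∑ j, ringPsi Ψ s x j * βMLE a s j)) ∧
    c.sigmaSqLin (Phi Ψ βMLE) (c.thetaL (Phi Ψ βMLE)) (c.betaL (Phi Ψ βMLE))
        ≤ c.sigmaSqLin Ψ 0 0 := by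
  haveI := hc.prob
  have hS := hc.mS; have hX := hc.mX
  obtain ⟨hmeasΦ, -, c', C', hc'0, -, heigC⟩ := hΦ
  have heig : ∀ s (v : (Fin k ⊕ Bool) → ℝ), c' * (∑ j, v j ^ 2)
      ≤ ∑ j, v j * Matrix.mulVec (c.gram (Phi Ψ βMLE) s) v j := fun s v => (heigC s v).1
  -- integrability of Ψ on strata, via the inl components of Φ
  have hintΨ : ∀ s j, IntegrableOn (fun ω => Ψ s (c.X ω) j) (c.stratum s) c.P := by
    intro s j
    have h := phi_intOn c hc hX (Phi Ψ βMLE) hmeasΦ hc'0 heig s (Sum.inl j)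
    simpa [CARPop.Phi] using h
  -- inl components of the centered Φ agree with the centered Ψ
  have hψeq : ∀ (s : 𝒮) (ω : Ω) (j : Fin k),
      c.psiTilt (Phi Ψ βMLE) s ω (Sum.inl j) = c.psiTilt Ψ s ω j := by
    intro s ω j
    simp [CARPop.psiTilt, CARPop.Phi]
  have hsum_inl : ∀ (s' : 𝒮) (ω : Ω) (t : Fin k → ℝ),
      (∑ j : Fin k ⊕ Bool, c.psiTilt (Phi Ψ βMLE) s' ω j
          * Sum.elim t (fun _ => (0:ℝ)) j)
        = ∑ j : Fin k, c.psiTilt Ψ s' ω j * t j := by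
    intro s' ω t
    rw [Fintype.sum_sum_type]
    simp [hψeq]
  refine ⟨?_, ?_, ?_⟩
  · -- vs. the optimal linear adjustment with Ψ
    exact main_ineq c hc (Phi Ψ βMLE) hmeasΦ hc'0 heig
      (linWM Ψ (c.thetaL Ψ)) (linWM Ψ (c.betaL Ψ))
      (fun a s => Sum.elim (c.thetaL Ψ a s) (fun _ => 0))
      (fun a s => Sum.elim (c.betaL Ψ a s) (fun _ => 0))
      (fun a ω => by
        rw [tilt_linWM c hc Ψ hintΨ (c.thetaL Ψ) a ω, hsum_inl])
      (fun a ω => by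
        rw [tilt_linWM c hc Ψ hintΨ (c.betaL Ψ) a ω, hsum_inl])
  · -- vs. the nonlinear (logistic) adjustment
    set mY : Bool → 𝒮 → (Fin d → ℝ) → ℝ :=
      fun a s x => ∑ j, ringPsi Ψ s x j * c.thetaOLS Ψ a s j with hmY
    set mD : Bool → 𝒮 → (Fin d → ℝ) → ℝ :=
      fun a s x => logistic (∑ j, ringPsi Ψ s x j * βMLE a s j) with hmD
    have hwm : ∀ a, c.wm mY a = fun ω =>
        (fun s => c.thetaOLS Ψ a s 0) (c.S ω)
          + c.wm (linWM Ψ (fun a' s j => c.thetaOLS Ψ a' s j.succ)) a ω := by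
      intro a
      funext ω
      simp only [CARPop.wm, hmY, CARPop.linWM, CARPop.ringPsi, Fin.sum_univ_succ,
        Fin.cons_zero, Fin.cons_succ, one_mul]
    have hintLin : ∀ a s, IntegrableOn
        (c.wm (linWM Ψ (fun a' s j => c.thetaOLS Ψ a' s j.succ)) a) (c.stratum s) c.P := by
      intro a s
      refine IntegrableOn.congr_fun
        (f := fun ω => ∑ j, Ψ s (c.X ω) j * c.thetaOLS Ψ a s j.succ)
        (integrable_finset_sum _ fun j _ => (hintΨ s j).mul_const _)
        (fun ω hω => ?_) (stratum_meas c hS s)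
      simp only [CARPop.wm, CARPop.linWM, (mem_stratum c).1 hω]
    have hY : ∀ a ω, c.tilt (c.wm mY a) ω
        = ∑ j, c.psiTilt (Phi Ψ βMLE) (c.S ω) ω j
            * Sum.elim (fun j' : Fin k => c.thetaOLS Ψ a (c.S ω) j'.succ)
                (fun _ => (0:ℝ)) j := by
      intro a ω
      have h3 := tilt_constS_add c hc hS (fun s => c.thetaOLS Ψ a s 0)
        (c.wm (linWM Ψ (fun a' s j => c.thetaOLS Ψ a' s j.succ)) a) (hintLin a) ω
      rw [hwm a, h3, tilt_linWM c hc Ψ hintΨ _ a ω, hsum_inl]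
    have hD : ∀ a ω, c.tilt (c.wm mD a) ω
        = ∑ j, c.psiTilt (Phi Ψ βMLE) (c.S ω) ω j
            * (fun j' => if j' = (Sum.inr a : Fin k ⊕ Bool) then (1:ℝ) else 0) j := by
      intro a ω
      have h1 : (∑ j, c.psiTilt (Phi Ψ βMLE) (c.S ω) ω j
            * (fun j' => if j' = (Sum.inr a : Fin k ⊕ Bool) then (1:ℝ) else 0) j)
          = c.psiTilt (Phi Ψ βMLE) (c.S ω) ω (Sum.inr a) := by
        rw [Finset.sum_eq_single (Sum.inr a)]
        · simp
        · intro b _ hb; simp [hb]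
        · exact fun h => absurd (Finset.mem_univ _) h
      rw [h1]
      show c.wm mD a ω - c.cES (c.wm mD a) ω = _
      unfold CARPop.cES
      have h2 : c.cEs (c.S ω) (c.wm mD a)
          = c.cEs (c.S ω) (fun ω' => Phi Ψ βMLE (c.S ω) (c.X ω') (Sum.inr a)) :=
        cEs_congr c hS (fun ω' hω' => by
          simp [CARPop.wm, hmD, CARPop.Phi, (mem_stratum c).1 hω'])
      rw [h2]
      simp [CARPop.psiTilt, CARPop.wm, hmD, CARPop.Phi]
    exact main_ineq c hc (Phi Ψ βMLE) hmeasΦ hc'0 heig mY mD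
      (fun a s => Sum.elim (fun j' : Fin k => c.thetaOLS Ψ a s j'.succ) (fun _ => 0))
      (fun a s j => if j = (Sum.inr a : Fin k ⊕ Bool) then (1:ℝ) else 0)
      hY hD
  · -- vs. no adjustment
    refine main_ineq c hc (Phi Ψ βMLE) hmeasΦ hc'0 heig
      (linWM Ψ 0) (linWM Ψ 0) (fun _ _ => 0) (fun _ _ => 0) ?_ ?_ <;>
      · intro a ω
        rw [tilt_linWM c hc Ψ hintΨ 0 a ω]
        simp
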